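/- arXiv:1403.5079 — 7 statements merged into one kernel-verified Lean document; each statement's English description precedes it below -/
import Mathlib

section
/- If [w] is a Lie monomial lying in the second derived subalgebra [L',L'] of the free Lie ring L, then all partial right derivatives ∂'_i[w], after applying the abelianization map φ' : U(L) → Z[x_1,...,x_n], vanish; hence the partial derivatives ∂_i : M → Z[x_1,...,x_n] on the free metabelian Lie ring M = L/[L',L'] are well-defined. -/
attribute [local instance] LieRing.ofAssociativeRing

/-- The natural embedding `ω : L → U(L)` of the free Lie ring on `x₁,…,xₙ` into its
universal enveloping algebra, identified with the free associative algebra. -/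
noncomputable def ω (n : ℕ) : FreeLieAlgebra ℤ (Fin n) →ₗ⁅ℤ⁆ FreeAlgebra ℤ (Fin n) :=
  FreeLieAlgebra.lift ℤ (FreeAlgebra.ι ℤ)

/-- The natural homomorphism `φ' : U(L) → ℤ[x₁,…,xₙ]` to the commutative polynomial
ring, sending each generator to the corresponding commuting variable. -/
noncomputable def φ' (n : ℕ) : FreeAlgebra ℤ (Fin n) →ₐ[ℤ] MvPolynomial (Fin n) ℤ :=
  FreeAlgebra.lift ℤ (fun i => MvPolynomial.X i)

namespace DerivAux

variable {n : ℕ}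

/-- The identification of the free algebra with the monoid algebra on the free monoid. -/
noncomputable def e (n : ℕ) :
    FreeAlgebra ℤ (Fin n) ≃ₐ[ℤ] MonoidAlgebra ℤ (FreeMonoid (Fin n)) :=
  FreeAlgebra.equivMonoidAlgebraFreeMonoid

lemma e_ι (j : Fin n) :
    e n (FreeAlgebra.ι ℤ j) = MonoidAlgebra.single (FreeMonoid.of j) 1 := by
  show (FreeAlgebra.lift ℤ _) (FreeAlgebra.ι ℤ j) = _
  rw [FreeAlgebra.lift_ι_apply]
  rfl

/-- `g i w` is the word obtained from `w` by removing a leading letter `i`, and `0` if `w`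
does not start with `i`. -/
noncomputable def g (i : Fin n) (w : FreeMonoid (Fin n)) : MonoidAlgebra ℤ (FreeMonoid (Fin n)) :=
  match FreeMonoid.toList w with
  | [] => 0
  | j :: l => if j = i then MonoidAlgebra.single (FreeMonoid.ofList l) 1 else 0

lemma g_of_mul (i j : Fin n) (w : FreeMonoid (Fin n)) :
    g i (FreeMonoid.of j * w) = if j = i then MonoidAlgebra.single w 1 else 0 := rfl

lemma g_one (i : Fin n) : g i 1 = 0 := rfl

/-- Left division by the letter `i`, on the monoid-algebra model. -/
noncomputable def πM (i : Fin n) :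
    MonoidAlgebra ℤ (FreeMonoid (Fin n)) →ₗ[ℤ] MonoidAlgebra ℤ (FreeMonoid (Fin n)) :=
  (Finsupp.lsum ℤ fun w => LinearMap.toSpanSingleton ℤ _ (g i w)) ∘ₗ
    (MonoidAlgebra.coeffLinearEquiv ℤ).toLinearMap

lemma πM_single (i : Fin n) (w : FreeMonoid (Fin n)) (r : ℤ) :
    πM i (MonoidAlgebra.single w r) = r • g i w := by
  show (Finsupp.lsum ℤ fun w => LinearMap.toSpanSingleton ℤ _ (g i w)) (Finsupp.single w r) = _
  erw [Finsupp.lsum_single]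
  rw [LinearMap.toSpanSingleton_apply]

lemma πM_of_mul (i j : Fin n) (F : MonoidAlgebra ℤ (FreeMonoid (Fin n))) :
    πM i (MonoidAlgebra.single (FreeMonoid.of j) 1 * F) = if j = i then F else 0 := by
  induction F using MonoidAlgebra.induction_linear with
  | zero => simp
  | add f g hf hg =>
    rw [mul_add, map_add, hf, hg]
    split <;> simp
  | single w r =>
    rw [MonoidAlgebra.single_mul_single, one_mul]
    rw [πM_single i (FreeMonoid.of j * w) r, g_of_mul]
    split <;> simp [MonoidAlgebra.smul_single']

/-- Left division by the letter `i`, on the free algebra. -/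
noncomputable def π (n : ℕ) (i : Fin n) : FreeAlgebra ℤ (Fin n) →ₗ[ℤ] FreeAlgebra ℤ (Fin n) :=
  ((e n).symm.toLinearMap.comp (πM i)).comp (e n).toLinearMap

lemma π_ι_mul (i j : Fin n) (b : FreeAlgebra ℤ (Fin n)) :
    π n i (FreeAlgebra.ι ℤ j * b) = if j = i then b else 0 := by
  show (e n).symm (πM i (e n (FreeAlgebra.ι ℤ j * b))) = _
  simp only [map_mul, e_ι, πM_of_mul]
  split <;> simp

lemma π_algebraMap (i : Fin n) (r : ℤ) :
    π n i (algebraMap ℤ (FreeAlgebra ℤ (Fin n)) r) = 0 := by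
  show (e n).symm (πM i (e n (algebraMap ℤ (FreeAlgebra ℤ (Fin n)) r))) = _
  simp only [AlgEquiv.commutes]
  rw [show (algebraMap ℤ (MonoidAlgebra ℤ (FreeMonoid (Fin n)))) r
      = MonoidAlgebra.single 1 r from rfl]
  rw [πM_single, g_one]
  simp

/-- The augmentation (constant coefficient) map on the free algebra. -/
noncomputable def ε (n : ℕ) : FreeAlgebra ℤ (Fin n) →ₐ[ℤ] ℤ :=
  FreeAlgebra.lift ℤ (fun _ => (0 : ℤ))

lemma π_mul (i : Fin n) (a b : FreeAlgebra ℤ (Fin n)) :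
    π n i (a * b) = π n i a * b + ε n a • π n i b := by
  induction a using FreeAlgebra.induction generalizing b with
  | grade0 r =>
    rw [π_algebraMap, zero_mul, zero_add]
    have : (algebraMap ℤ (FreeAlgebra ℤ (Fin n)) r) * b = r • b := by
      exact (Algebra.smul_def r b).symm
    rw [this, map_smul]
    simp [ε]
  | grade1 x =>
    rw [π_ι_mul]
    have hπx : π n i (FreeAlgebra.ι ℤ x) = if x = i then 1 else 0 := by
      have := π_ι_mul i x (1 : FreeAlgebra ℤ (Fin n))
      rwa [mul_one] at this
    have hεx : ε n (FreeAlgebra.ι ℤ x) = 0 := by simp [ε]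
    rw [hπx, hεx, zero_smul, add_zero]
    split <;> simp
  | mul a₁ a₂ ih₁ ih₂ =>
    rw [mul_assoc, ih₁, ih₂, ih₁, map_mul, smul_add, smul_smul, add_mul, smul_mul_assoc,
      mul_assoc, add_assoc]
  | add a₁ a₂ ih₁ ih₂ =>
    rw [add_mul, map_add, ih₁, ih₂, map_add, map_add, add_mul, add_smul]
    abel

lemma ε_ω (u : FreeLieAlgebra ℤ (Fin n)) : ε n (ω n u) = 0 := by
  have h : ((ε n).toLieHom.comp (ω n)) =
      FreeLieAlgebra.lift ℤ (fun _ => (0 : ℤ)) := by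
    apply FreeLieAlgebra.hom_ext
    intro x
    show ε n (ω n (FreeLieAlgebra.of ℤ x)) = _
    rw [show ω n (FreeLieAlgebra.of ℤ x) = FreeAlgebra.ι ℤ x from FreeLieAlgebra.lift_of_apply (R := ℤ) _ _]
    simp [ω, ε, FreeLieAlgebra.lift_of_apply]
  have h0 : (FreeLieAlgebra.lift ℤ (fun _ => (0 : ℤ))) =
      (0 : FreeLieAlgebra ℤ (Fin n) →ₗ⁅ℤ⁆ ℤ) := by
    apply FreeLieAlgebra.hom_ext
    intro x
    simp [FreeLieAlgebra.lift_of_apply]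
    rfl
  have := LieHom.congr_fun (h.trans h0) u
  exact this

lemma φ'_ω_derived (u : FreeLieAlgebra ℤ (Fin n))
    (hu : u ∈ LieAlgebra.derivedSeries ℤ (FreeLieAlgebra ℤ (Fin n)) 1) :
    φ' n (ω n u) = 0 := by
  have h1 : LieAlgebra.derivedSeries ℤ (FreeLieAlgebra ℤ (Fin n)) 1 = ⁅(⊤ : LieIdeal ℤ (FreeLieAlgebra ℤ (Fin n))), (⊤ : LieIdeal ℤ (FreeLieAlgebra ℤ (Fin n)))⁆ := by
    rw [LieAlgebra.derivedSeries_def, LieAlgebra.derivedSeriesOfIdeal_succ,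
      LieAlgebra.derivedSeriesOfIdeal_zero]
  rw [h1] at hu
  rw [← LieSubmodule.mem_toSubmodule, LieSubmodule.lieIdeal_oper_eq_linear_span'] at hu
  refine Submodule.span_induction ?_ ?_ ?_ ?_ hu
  · rintro m ⟨x, -, y, -, rfl⟩
    rw [LieHom.map_lie, Ring.lie_def, map_sub, map_mul, map_mul, mul_comm, sub_self]
  · simp
  · intro x y _ _ hx hy
    rw [map_add, map_add, hx, hy, add_zero]
  · intro r x _ hx
    rw [map_smul, map_smul, hx, smul_zero]

lemma key (i : Fin n) (w : FreeLieAlgebra ℤ (Fin n))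
    (hw : w ∈ LieAlgebra.derivedSeries ℤ (FreeLieAlgebra ℤ (Fin n)) 2) :
    φ' n (π n i (ω n w)) = 0 := by
  have h2 : LieAlgebra.derivedSeries ℤ (FreeLieAlgebra ℤ (Fin n)) 2 =
      ⁅LieAlgebra.derivedSeries ℤ (FreeLieAlgebra ℤ (Fin n)) 1,
        LieAlgebra.derivedSeries ℤ (FreeLieAlgebra ℤ (Fin n)) 1⁆ := by
    rw [LieAlgebra.derivedSeries_def, LieAlgebra.derivedSeriesOfIdeal_succ]
  rw [h2] at hw
  rw [← LieSubmodule.mem_toSubmodule, LieSubmodule.lieIdeal_oper_eq_linear_span'] at hw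
  refine Submodule.span_induction ?_ ?_ ?_ ?_ hw
  · rintro m ⟨u, hu, v, hv, rfl⟩
    rw [LieHom.map_lie, Ring.lie_def, map_sub, π_mul, π_mul, ε_ω, ε_ω, zero_smul, zero_smul,
      add_zero, add_zero, map_sub, map_mul, map_mul,
      φ'_ω_derived u hu, φ'_ω_derived v hv, mul_zero, mul_zero, sub_self]
  · simp
  · intro x y _ _ hx hy
    rw [map_add, map_add, map_add, hx, hy, add_zero]
  · intro r x _ hx
    rw [map_smul, map_smul, map_smul, hx, smul_zero]

end DerivAux

/-- If `w` lies in the second derived subalgebra `[L',L']` of the free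
Lie ring `L`, then all its partial right derivatives vanish after applying the
abelianization map `φ' : U(L) → ℤ[x₁,…,xₙ]`; hence the partial derivatives on the free
metabelian Lie ring `M = L/[L',L']` are well-defined. -/
theorem derivatives_vanish_on_second_derived (n : ℕ) (w : FreeLieAlgebra ℤ (Fin n))
    (hw : w ∈ LieAlgebra.derivedSeries ℤ (FreeLieAlgebra ℤ (Fin n)) 2)
    (d : Fin n → FreeAlgebra ℤ (Fin n))
    (hd : ω n w = ∑ i, FreeAlgebra.ι ℤ i * d i) :
    ∀ i, φ' n (d i) = 0 := by
  intro i
  have hdi : DerivAux.π n i (ω n w) = d i := by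
    rw [hd, map_sum]
    simp only [DerivAux.π_ι_mul]
    simp
  rw [← hdi]
  exact DerivAux.key i w hw
end

section
/- Chain rule for endomorphisms of the free metabelian Lie ring: if μ_1, μ_2 are endomorphisms of M with μ_j(x_i) = y_{j,i}, and z_j = y_{1,j}(y_{2,1},...,y_{2,n}), then the Jacobi matrices satisfy J(z_1,...,z_n) = J(y_{2,1},...,y_{2,n}) · J_{ȳ_{2,1},...,ȳ_{2,n}}(y_{1,1},...,y_{1,n}), where the second factor is the Jacobi matrix of (y_{1,1},...,y_{1,n}) with the linear parts ȳ_{2,i} substituted for the variables. -/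
attribute [local instance 100] LieRing.ofAssociativeRing

/-- Auxiliary hom into 2×2 matrices encoding the left Fox derivative `∂'ₖ`. -/
noncomputable def Ψ (n : ℕ) (k : Fin n) :
    FreeAlgebra ℤ (Fin n) →ₐ[ℤ] Matrix (Fin 2) (Fin 2) (MvPolynomial (Fin n) ℤ) :=
  FreeAlgebra.lift ℤ (fun i => !![0, if i = k then 1 else 0; 0, MvPolynomial.X i])

lemma Ψ_bottom (n : ℕ) (k : Fin n) (a : FreeAlgebra ℤ (Fin n)) :
    Ψ n k a 1 0 = 0 ∧ Ψ n k a 1 1 = φ' n a := by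
  induction a with
  | grade0 r =>
    simp [← Matrix.diagonal_intCast, Matrix.diagonal_apply]
  | grade1 x =>
    simp [Ψ, φ', FreeAlgebra.lift_ι_apply]
  | mul a b ha hb =>
    simp only [map_mul, Matrix.mul_apply, Fin.sum_univ_two, ha.1, ha.2, hb.1, hb.2]
    simp
  | add a b ha hb =>
    simp [map_add, Matrix.add_apply, ha.1, ha.2, hb.1, hb.2]

lemma Ψ_mul_ι (n : ℕ) (k i : Fin n) (a : FreeAlgebra ℤ (Fin n)) :
    Ψ n k (FreeAlgebra.ι ℤ i * a) 0 1 = if i = k then φ' n a else 0 := by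
  rw [map_mul, Matrix.mul_apply, Fin.sum_univ_two]
  have h1 : Ψ n k (FreeAlgebra.ι ℤ i) = !![0, if i = k then 1 else 0; 0, MvPolynomial.X i] :=
    FreeAlgebra.lift_ι_apply _ _
  rw [h1, (Ψ_bottom n k a).2]
  simp [Matrix.cons_val_zero, Matrix.cons_val_one]

lemma Ψ_extract (n : ℕ) (k : Fin n) (d : Fin n → FreeAlgebra ℤ (Fin n)) :
    Ψ n k (∑ i, FreeAlgebra.ι ℤ i * d i) 0 1 = φ' n (d k) := by
  rw [map_sum, Matrix.sum_apply]
  rw [Finset.sum_congr rfl (fun i _ => Ψ_mul_ι n k i (d i))]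
  simp

/-- **chain rule.** If endomorphisms `μ₁, μ₂` of the free metabelian Lie
ring are given by Lie polynomials `y_{1,i}, y_{2,i}` and `z_j = y_{1,j}(y_{2,1},…,y_{2,n})`,
then `J(z₁,…,zₙ) = J(y_{2,1},…,y_{2,n}) · J_{ȳ₂}(y_{1,1},…,y_{1,n})`, where in the second
factor the linear parts `ȳ_{2,i}` (i.e. the abelianizations `φ'(ω y_{2,i})`) are
substituted for the variables.  The Jacobi matrices are `J(g₁,…,gₙ) = (∂ᵢ g_j)` with
`∂ᵢ g = φ'(∂'ᵢ g)` given by the decompositions `ω g = ∑ᵢ xᵢ·∂'ᵢ g`. -/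
theorem chain_rule_jacobi (n : ℕ) (y₁ y₂ : Fin n → FreeLieAlgebra ℤ (Fin n))
    (z : Fin n → FreeLieAlgebra ℤ (Fin n))
    (hz : ∀ j, z j = (FreeLieAlgebra.lift ℤ y₂) (y₁ j))
    (dz d₁ d₂ : Fin n → Fin n → FreeAlgebra ℤ (Fin n))
    (hdz : ∀ j, ω n (z j) = ∑ i, FreeAlgebra.ι ℤ i * dz j i)
    (hd₁ : ∀ j, ω n (y₁ j) = ∑ i, FreeAlgebra.ι ℤ i * d₁ j i)
    (hd₂ : ∀ j, ω n (y₂ j) = ∑ i, FreeAlgebra.ι ℤ i * d₂ j i) :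
    (Matrix.of fun i j => φ' n (dz j i)) =
      (Matrix.of fun i j => φ' n (d₂ j i)) *
        (Matrix.of fun i j =>
          MvPolynomial.aeval (fun l => φ' n (ω n (y₂ l))) (φ' n (d₁ j i))) := by
  set A : FreeAlgebra ℤ (Fin n) →ₐ[ℤ] FreeAlgebra ℤ (Fin n) :=
    FreeAlgebra.lift ℤ (fun i => ω n (y₂ i)) with hA
  -- ω ∘ lift y₂ = A ∘ ω
  have hcomm : ∀ v, ω n ((FreeLieAlgebra.lift ℤ y₂) v) = A (ω n v) := by
    intro v
    have : (ω n).comp (FreeLieAlgebra.lift ℤ y₂) = A.toLieHom.comp (ω n) := by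
      apply FreeLieAlgebra.hom_ext
      intro x
      show ω n (FreeLieAlgebra.lift ℤ y₂ (FreeLieAlgebra.of ℤ x)) = A (ω n (FreeLieAlgebra.of ℤ x))
      simp only [ω, hA, FreeLieAlgebra.lift_of_apply]
      erw [FreeLieAlgebra.lift_of_apply, FreeAlgebra.lift_ι_apply]
    exact LieHom.congr_fun this v
  -- φ' ∘ A = aeval (φ' ∘ ω ∘ y₂) ∘ φ'
  have hphiA : ∀ a, φ' n (A a) =
      MvPolynomial.aeval (fun l => φ' n (ω n (y₂ l))) (φ' n a) := by
    intro a
    have : (φ' n).comp A =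
        ((MvPolynomial.aeval (fun l => φ' n (ω n (y₂ l)))).comp (φ' n)) := by
      apply FreeAlgebra.hom_ext
      ext x
      simp [φ', hA, FreeAlgebra.lift_ι_apply]
    exact AlgHom.congr_fun this a
  refine Matrix.ext fun k j => ?_
  -- rewrite ω (z j) as a sum of ι m * (...)
  have hω : (∑ m, FreeAlgebra.ι ℤ m * dz j m) =
      ∑ m, FreeAlgebra.ι ℤ m * (∑ i, d₂ i m * A (d₁ j i)) := by
    rw [← hdz j, hz j, hcomm, hd₁ j, map_sum]
    have : ∀ i, A (FreeAlgebra.ι ℤ i * d₁ j i) =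
        ∑ m, FreeAlgebra.ι ℤ m * (d₂ i m * A (d₁ j i)) := by
      intro i
      rw [map_mul, FreeAlgebra.lift_ι_apply, hd₂ i, Finset.sum_mul]
      simp [mul_assoc]
    rw [Finset.sum_congr rfl (fun i _ => this i), Finset.sum_comm]
    simp [Finset.mul_sum]
  have := congrArg (fun a => Ψ n k a 0 1) hω
  simp only [Ψ_extract] at this
  rw [Matrix.mul_apply]
  simp only [Matrix.of_apply]
  rw [this, map_sum]
  exact Finset.sum_congr rfl (fun i _ => by rw [map_mul, hphiA])
end

section
/- If μ : M → M is an automorphism of the free metabelian Lie ring M with μ(x_i) = g_i, then the Jacobi matrix J(g_1,...,g_n) = (∂_i g_j) is invertible in the ring of n×n matrices over Z[x_1,...,x_n]. -/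
attribute [local instance 100] LieRing.ofAssociativeRing

/-- The free metabelian Lie ring `M` on `x₁,…,xₙ`: the quotient of the free Lie ring by
the second derived ideal `[L',L']`. -/
abbrev M (n : ℕ) :=
  FreeLieAlgebra ℤ (Fin n) ⧸ LieAlgebra.derivedSeries ℤ (FreeLieAlgebra ℤ (Fin n)) 2

/-- The natural projection `L → M`. -/
noncomputable def mkM (n : ℕ) : FreeLieAlgebra ℤ (Fin n) → M n := LieSubmodule.Quotient.mk

/-- `D` is the system of partial derivatives `∂ᵢ : M → ℤ[x₁,…,xₙ]` of the free metabelian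
Lie ring: for any lift `w ∈ L` of an element of `M` with right derivatives `d`
(i.e. `ω w = ∑ᵢ xᵢ·dᵢ` in `U(L)`), `D` is given by abelianizing the `dᵢ`. -/
def IsDeriv (n : ℕ) (D : M n → Fin n → MvPolynomial (Fin n) ℤ) : Prop :=
  ∀ (w : FreeLieAlgebra ℤ (Fin n)) (d : Fin n → FreeAlgebra ℤ (Fin n)),
    ω n w = ∑ i, FreeAlgebra.ι ℤ i * d i → D (mkM n w) = fun i => φ' n (d i)


namespace Jac

variable (n : ℕ)

noncomputable def e : FreeAlgebra ℤ (Fin n) ≃ₐ[ℤ] MonoidAlgebra ℤ (FreeMonoid (Fin n)) :=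
  FreeAlgebra.equivMonoidAlgebraFreeMonoid

lemma e_ι (i : Fin n) : e n (FreeAlgebra.ι ℤ i) = MonoidAlgebra.single (FreeMonoid.of i) 1 := by
  simp [e, FreeAlgebra.equivMonoidAlgebraFreeMonoid]

/-- value of the left derivative on a basis word -/
noncomputable def vmap (i : Fin n) (w : FreeMonoid (Fin n)) :
    MonoidAlgebra ℤ (FreeMonoid (Fin n)) :=
  match FreeMonoid.toList w with
  | [] => 0
  | j :: t => if j = i then MonoidAlgebra.single (FreeMonoid.ofList t) 1 else 0

/-- the left derivative on the monoid algebra -/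
noncomputable def δ (i : Fin n) :
    MonoidAlgebra ℤ (FreeMonoid (Fin n)) →ₗ[ℤ] MonoidAlgebra ℤ (FreeMonoid (Fin n)) :=
  (Finsupp.lsum ℤ fun w => LinearMap.toSpanSingleton ℤ _ (vmap n i w)) ∘ₗ
    (MonoidAlgebra.coeffLinearEquiv ℤ).toLinearMap

lemma δ_single (i : Fin n) (w : FreeMonoid (Fin n)) (c : ℤ) :
    δ n i (MonoidAlgebra.single w c) = c • vmap n i w := by
  have : δ n i (MonoidAlgebra.single w c)
      = (LinearMap.toSpanSingleton ℤ _ (vmap n i w)) c :=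
      Finsupp.lsum_single ℤ (fun w => LinearMap.toSpanSingleton ℤ _ (vmap n i w)) w c
  rw [this, LinearMap.toSpanSingleton_apply]

/-- the augmentation map -/
noncomputable def ε : MonoidAlgebra ℤ (FreeMonoid (Fin n)) →ₐ[ℤ] ℤ :=
  MonoidAlgebra.lift ℤ ℤ (FreeMonoid (Fin n)) (FreeMonoid.lift fun _ => (0 : ℤ))

lemma decomp (b : MonoidAlgebra ℤ (FreeMonoid (Fin n))) :
    b = MonoidAlgebra.single 1 (ε n b) +
      ∑ i, MonoidAlgebra.single (FreeMonoid.of i) 1 * δ n i b := by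
  induction b using MonoidAlgebra.induction_linear with
  | zero => simp
  | add f g hf hg =>
      simp only [map_add, MonoidAlgebra.single_add]
      conv_lhs => rw [hf, hg]
      have : ∀ i : Fin n, (MonoidAlgebra.single (R := ℤ) (FreeMonoid.of i) (1:ℤ)) * (δ n i f + δ n i g)
          = MonoidAlgebra.single (FreeMonoid.of i) 1 * δ n i f
            + MonoidAlgebra.single (FreeMonoid.of i) 1 * δ n i g := fun i => mul_add _ _ _
      simp only [this, Finset.sum_add_distrib]
      abel
  | single w c =>
      obtain ⟨l, rfl⟩ : ∃ l, FreeMonoid.ofList l = w := ⟨FreeMonoid.toList w, rfl⟩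
      cases l with
      | nil =>
          have h1 : (FreeMonoid.ofList ([] : List (Fin n))) = 1 := rfl
          simp only [h1, δ_single]
          have : vmap n = fun i (w : FreeMonoid (Fin n)) =>
            (match FreeMonoid.toList w with
            | [] => 0
            | j :: t => if j = i then MonoidAlgebra.single (FreeMonoid.ofList t) 1 else 0) := rfl
          simp [ε, MonoidAlgebra.lift_single, vmap]
      | cons j t =>
          rw [FreeMonoid.ofList_cons]
          have hε : ε n (MonoidAlgebra.single (FreeMonoid.of j * FreeMonoid.ofList t) c) = 0 := by
            simp [ε, MonoidAlgebra.lift_single, FreeMonoid.lift_apply]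
          rw [hε]
          simp only [δ_single, MonoidAlgebra.single_zero, zero_add]
          have hv : ∀ i, vmap n i (FreeMonoid.of j * FreeMonoid.ofList t)
              = if j = i then MonoidAlgebra.single (FreeMonoid.ofList t) 1 else 0 := by
            intro i; rfl
          simp only [hv]
          rw [Finset.sum_eq_single j]
          · simp [MonoidAlgebra.single_mul_single]
          · intro i _ hne
            rw [if_neg (by exact fun h => hne h.symm)]
            simp
          · simp

end Jac

namespace Jac

variable (n : ℕ)

/-- the left derivatives on the free algebra -/
noncomputable def dvec (a : FreeAlgebra ℤ (Fin n)) (i : Fin n) : FreeAlgebra ℤ (Fin n) :=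
  (e n).symm (δ n i (e n a))

lemma decompA (a : FreeAlgebra ℤ (Fin n)) (h : ε n (e n a) = 0) :
    a = ∑ i, FreeAlgebra.ι ℤ i * dvec n a i := by
  have h2 := decomp n (e n a)
  rw [h] at h2
  have h3 : a = (e n).symm (e n a) := ((e n).symm_apply_apply a).symm
  rw [h3]
  conv_lhs => rw [h2]
  rw [map_add, map_sum]
  have h4 : ((e n).symm (MonoidAlgebra.single (1 : FreeMonoid (Fin n)) (0:ℤ))) = 0 := by
    simp
  rw [h4, zero_add]
  refine Finset.sum_congr rfl fun i _ => ?_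
  rw [map_mul]
  congr 1
  · have := e_ι n i
    exact ((e n).symm_apply_eq).mpr this.symm ▸ rfl
  · rw [(e n).symm_apply_apply]
    rfl

lemma eps_omega (v : FreeLieAlgebra ℤ (Fin n)) : ε n (e n (ω n v)) = 0 := by
  have hH : ∀ x, ((ε n).comp (e n).toAlgHom).toLieHom (ω n x) = 0 := by
    have h1 : (((ε n).comp (e n).toAlgHom).toLieHom).comp (ω n)
        = FreeLieAlgebra.lift ℤ (fun _ : Fin n => (0:ℤ)) := by
      apply FreeLieAlgebra.hom_ext
      intro i
      show ε n (e n (ω n (FreeLieAlgebra.of ℤ i))) = FreeLieAlgebra.lift ℤ (fun _ : Fin n => (0:ℤ)) (FreeLieAlgebra.of ℤ i)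
      have : ω n (FreeLieAlgebra.of ℤ i) = FreeAlgebra.ι ℤ i :=
        FreeLieAlgebra.lift_of_apply _ _
      rw [this, FreeLieAlgebra.lift_of_apply]
      show ε n (e n (FreeAlgebra.ι ℤ i)) = 0
      rw [e_ι]
      simp [ε, MonoidAlgebra.lift_single]
    have h2 : FreeLieAlgebra.lift ℤ (fun _ : Fin n => (0:ℤ)) = (0 : _ →ₗ⁅ℤ⁆ ℤ) := by
      apply FreeLieAlgebra.hom_ext
      intro i
      rw [FreeLieAlgebra.lift_of_apply]
      rfl
    intro x
    have := DFunLike.congr_fun (h1.trans h2) x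
    exact this
  exact hH v

lemma omega_decomp (v : FreeLieAlgebra ℤ (Fin n)) :
    ω n v = ∑ i, FreeAlgebra.ι ℤ i * dvec n (ω n v) i :=
  decompA n _ (eps_omega n v)

end Jac

namespace Jac

/-- `mkM` as a morphism of Lie algebras. -/
noncomputable def mkMHom (n : ℕ) : FreeLieAlgebra ℤ (Fin n) →ₗ⁅ℤ⁆ M n :=
  { (LieSubmodule.Quotient.mk'
      (LieAlgebra.derivedSeries ℤ (FreeLieAlgebra ℤ (Fin n)) 2)).toLinearMap with
    map_lie' := by intro x y; exact (LieSubmodule.Quotient.mk_bracket _ _ _).symm }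

lemma mkM_surjective (n : ℕ) : Function.Surjective (mkM n) :=
  Submodule.Quotient.mk_surjective _

end Jac

/-- If `μ : M → M` is an automorphism of the free metabelian Lie ring
with `μ(xᵢ) = gᵢ`, then the Jacobi matrix `J(g₁,…,gₙ) = (∂ᵢ g_j)` is invertible in the
ring of `n × n` matrices over `ℤ[x₁,…,xₙ]`. -/
theorem jacobi_of_automorphism_isUnit (n : ℕ)
    (D : M n → Fin n → MvPolynomial (Fin n) ℤ) (hD : IsDeriv n D)
    (μ : M n ≃ₗ⁅ℤ⁆ M n) (g : Fin n → M n)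
    (hg : ∀ i, g i = μ (mkM n (FreeLieAlgebra.of ℤ i))) :
    IsUnit (Matrix.of fun i j => D (g j) i) := by
  classical
  obtain ⟨w, hw⟩ : ∃ w : Fin n → FreeLieAlgebra ℤ (Fin n), ∀ i, mkM n (w i) = g i := by
    choose w hw using fun i => Jac.mkM_surjective n (g i)
    exact ⟨w, hw⟩
  set f : FreeLieAlgebra ℤ (Fin n) →ₗ⁅ℤ⁆ FreeLieAlgebra ℤ (Fin n) :=
    FreeLieAlgebra.lift ℤ w with hf
  set F : FreeAlgebra ℤ (Fin n) →ₐ[ℤ] FreeAlgebra ℤ (Fin n) :=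
    FreeAlgebra.lift ℤ (fun i => ω n (w i)) with hF
  set ρ : MvPolynomial (Fin n) ℤ →ₐ[ℤ] MvPolynomial (Fin n) ℤ :=
    MvPolynomial.aeval (fun i => φ' n (ω n (w i))) with hρ
  have hωof : ∀ i, ω n (FreeLieAlgebra.of ℤ i) = FreeAlgebra.ι ℤ i := fun i =>
    FreeLieAlgebra.lift_of_apply _ _
  have hFω : ∀ v, F (ω n v) = ω n (f v) := by
    have h : (AlgHom.toLieHom F).comp (ω n) = (ω n).comp f := by
      apply FreeLieAlgebra.hom_ext
      intro i
      simp only [LieHom.comp_apply, hωof, hf, FreeLieAlgebra.lift_of_apply]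
      show F (ω n (FreeLieAlgebra.of ℤ i)) = ω n (FreeLieAlgebra.lift ℤ w (FreeLieAlgebra.of ℤ i))
      rw [hωof, FreeLieAlgebra.lift_of_apply]
      rw [hF, FreeAlgebra.lift_ι_apply]
    intro v; exact DFunLike.congr_fun h v
  have hmkf : ∀ v, mkM n (f v) = μ (mkM n v) := by
    have h : (Jac.mkMHom n).comp f = (μ.toLieHom).comp (Jac.mkMHom n) := by
      apply FreeLieAlgebra.hom_ext
      intro i
      show mkM n (f (FreeLieAlgebra.of ℤ i)) = μ (mkM n (FreeLieAlgebra.of ℤ i))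
      rw [show f (FreeLieAlgebra.of ℤ i) = w i from FreeLieAlgebra.lift_of_apply _ _, hw, hg]
    intro v; exact DFunLike.congr_fun h v
  set dd : FreeLieAlgebra ℤ (Fin n) → Fin n → FreeAlgebra ℤ (Fin n) :=
    fun v i => Jac.dvec n (ω n v) i with hdd
  have hDv : ∀ v, D (mkM n v) = fun i => φ' n (dd v i) := fun v =>
    hD v (dd v) (Jac.omega_decomp n v)
  have hρφ : ∀ a, φ' n (F a) = ρ (φ' n a) := by
    have h : (φ' n).comp F = ρ.comp (φ' n) := by
      apply FreeAlgebra.hom_ext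
      funext i
      show φ' n (F (FreeAlgebra.ι ℤ i)) = ρ (φ' n (FreeAlgebra.ι ℤ i))
      rw [hF, FreeAlgebra.lift_ι_apply]
      have : φ' n (FreeAlgebra.ι ℤ i) = MvPolynomial.X i := FreeAlgebra.lift_ι_apply _ _
      rw [this, hρ, MvPolynomial.aeval_X]
    intro a; exact DFunLike.congr_fun h a
  have chain : ∀ v : FreeLieAlgebra ℤ (Fin n),
      D (μ (mkM n v)) = fun j => ∑ i, (D (g i) j) * ρ (D (mkM n v) i) := by
    intro v
    have hdec : ω n (f v) = ∑ j, FreeAlgebra.ι ℤ j * (∑ i, dd (w i) j * F (dd v i)) := by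
      rw [← hFω v]
      conv_lhs => rw [Jac.omega_decomp n v]
      rw [map_sum]
      have h1 : ∀ i, F (FreeAlgebra.ι ℤ i * dd v i)
          = (∑ j, FreeAlgebra.ι ℤ j * dd (w i) j) * F (dd v i) := by
        intro i
        rw [map_mul, hF, FreeAlgebra.lift_ι_apply, Jac.omega_decomp n (w i)]
      simp +zetaDelta only [h1, Finset.sum_mul]
      rw [Finset.sum_comm]
      simp only [Finset.mul_sum, mul_assoc]
    have h2 : D (μ (mkM n v)) = fun j => φ' n (∑ i, dd (w i) j * F (dd v i)) := by
      rw [← hmkf v]; exact hD (f v) _ hdec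
    rw [h2]
    funext j
    rw [map_sum]
    refine Finset.sum_congr rfl fun i _ => ?_
    rw [map_mul, hρφ, ← hw i, hDv (w i), hDv v]
  have hDx : ∀ k, D (mkM n (FreeLieAlgebra.of ℤ k))
      = fun i => if i = k then 1 else 0 := by
    intro k
    have hde : ω n (FreeLieAlgebra.of ℤ k)
        = ∑ i, FreeAlgebra.ι ℤ i * (if i = k then 1 else 0) := by
      rw [hωof]
      simp [mul_ite, mul_one, mul_zero, Finset.sum_ite_eq']
    rw [hD _ _ hde]
    funext i
    split <;> simp
  obtain ⟨v, hv⟩ : ∃ v : Fin n → FreeLieAlgebra ℤ (Fin n),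
      ∀ k, mkM n (v k) = μ.symm (mkM n (FreeLieAlgebra.of ℤ k)) := by
    choose v hv using fun k => Jac.mkM_surjective n (μ.symm (mkM n (FreeLieAlgebra.of ℤ k)))
    exact ⟨v, hv⟩
  have hμv : ∀ k, μ (mkM n (v k)) = mkM n (FreeLieAlgebra.of ℤ k) := by
    intro k; rw [hv]; exact μ.apply_symm_apply _
  have hAC : (Matrix.of fun i j => D (g j) i)
      * (Matrix.of fun i k => ρ (D (mkM n (v k)) i)) = 1 := by
    ext j k
    rw [Matrix.mul_apply, Matrix.one_apply]
    have h3 := congrFun (chain (v k)) j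
    rw [hμv k, hDx k] at h3
    simp only [Matrix.of_apply]
    rw [← h3]
  exact ⟨⟨_, _, hAC, mul_eq_one_comm.mp hAC⟩, rfl⟩
end

section
/- If {g_1,...,g_n} is a system of free generators of the free metabelian Lie ring M, then the determinant of the Jacobi matrix J(g_1,...,g_n) equals ±1 in Z[x_1,...,x_n]. -/
attribute [local instance] LieRing.ofAssociativeRing

/-- Units in `ℤ[x₁,…,xₙ]` are `±1`. -/
lemma mvpoly_int_unit {n : ℕ} (p : MvPolynomial (Fin n) ℤ) (hp : IsUnit p) :
    p = 1 ∨ p = -1 := by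
  induction n with
  | zero =>
    have h := hp.map (MvPolynomial.isEmptyRingEquiv ℤ (Fin 0)).toRingHom
    rcases Int.isUnit_iff.mp h with h1 | h1
    · left
      apply (MvPolynomial.isEmptyRingEquiv ℤ (Fin 0)).injective
      simpa using h1
    · right
      apply (MvPolynomial.isEmptyRingEquiv ℤ (Fin 0)).injective
      simpa using h1
  | succ m ih =>
    set e := MvPolynomial.finSuccEquiv ℤ m with he
    have hq : IsUnit (e p) := hp.map e.toAlgHom.toRingHom
    obtain ⟨hc, hn⟩ := Polynomial.coeff_isUnit_isNilpotent_of_isUnit hq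
    have hC : e p = Polynomial.C ((e p).coeff 0) := by
      ext i
      cases i with
      | zero => simp
      | succ i =>
        have hnil : IsNilpotent ((e p).coeff (i + 1)) := hn (i + 1) (Nat.succ_ne_zero i)
        rw [hnil.eq_zero, Polynomial.coeff_C]
        simp
    rcases ih _ hc with h1 | h1
    · left
      apply e.injective
      rw [hC, h1, map_one]
      simp
    · right
      apply e.injective
      rw [hC, h1, map_neg, map_one]
      simp

lemma single_decomp (n : ℕ) (k : Fin n) :
    ω n (FreeLieAlgebra.of ℤ k) =
      ∑ i, FreeAlgebra.ι ℤ i * (if i = k then (1 : FreeAlgebra ℤ (Fin n)) else 0) := by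
  rw [show ω n (FreeLieAlgebra.of ℤ k) = FreeAlgebra.ι ℤ k from FreeLieAlgebra.lift_of_apply _ _]
  simp [mul_ite]

lemma exists_decomp (n : ℕ) (w : FreeLieAlgebra ℤ (Fin n)) :
    ∃ d : Fin n → FreeAlgebra ℤ (Fin n), ω n w = ∑ i, FreeAlgebra.ι ℤ i * d i := by
  classical
  let S : Submodule ℤ (FreeAlgebra ℤ (Fin n)) :=
    { carrier := {a | ∃ d : Fin n → FreeAlgebra ℤ (Fin n), a = ∑ i, FreeAlgebra.ι ℤ i * d i}
      add_mem' := by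
        rintro a b ⟨d, rfl⟩ ⟨e, rfl⟩
        exact ⟨fun i => d i + e i, by
          rw [← Finset.sum_add_distrib]
          simp [mul_add]⟩
      zero_mem' := ⟨0, by simp⟩
      smul_mem' := by
        rintro c a ⟨d, rfl⟩
        exact ⟨fun i => c • d i, by
          rw [Finset.smul_sum]
          refine Finset.sum_congr rfl fun i _ => ?_
          exact (mul_smul_comm c (FreeAlgebra.ι ℤ i) (d i)).symm⟩ }
  have hmul : ∀ a ∈ S, ∀ b, a * b ∈ S := by
    rintro a ⟨d, rfl⟩ b
    exact ⟨fun i => d i * b, by rw [Finset.sum_mul]; simp [mul_assoc]⟩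
  let K : LieSubalgebra ℤ (FreeAlgebra ℤ (Fin n)) :=
    { S with
      lie_mem' := by
        intro a b ha hb
        rw [Ring.lie_def]
        exact sub_mem (hmul a ha b) (hmul b hb a) }
  have hx : ∀ i, FreeAlgebra.ι ℤ i ∈ K := by
    intro k
    refine ⟨fun i => if i = k then 1 else 0, ?_⟩
    simp [mul_ite]
  let j : FreeLieAlgebra ℤ (Fin n) →ₗ⁅ℤ⁆ K :=
    FreeLieAlgebra.lift ℤ (fun i => ⟨FreeAlgebra.ι ℤ i, hx i⟩)
  have hcomp : K.incl.comp j = ω n := by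
    apply FreeLieAlgebra.hom_ext
    intro x
    simp only [LieHom.comp_apply, j, FreeLieAlgebra.lift_of_apply, ω]
    exact congrArg Subtype.val (FreeLieAlgebra.lift_of_apply (fun i => (⟨FreeAlgebra.ι ℤ i, hx i⟩ : K)) x)
  have hmem : ω n w ∈ K := by
    rw [← hcomp]
    exact (j w).2
  exact hmem

noncomputable def mkL (n : ℕ) : FreeLieAlgebra ℤ (Fin n) →ₗ⁅ℤ⁆ M n :=
  { toLinearMap := (LieAlgebra.derivedSeries ℤ (FreeLieAlgebra ℤ (Fin n)) 2).toSubmodule.mkQ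
    map_lie' := rfl }

lemma mkL_apply (n : ℕ) (w : FreeLieAlgebra ℤ (Fin n)) : mkL n w = mkM n w := rfl

lemma mkM_surjective (n : ℕ) : Function.Surjective (mkM n) :=
  Submodule.Quotient.mk_surjective _

lemma M_metabelian (n : ℕ) : ∀ a b c d : M n, ⁅⁅a, b⁆, ⁅c, d⁆⁆ = 0 := by
  intro a b c d
  obtain ⟨a, rfl⟩ := mkM_surjective n a
  obtain ⟨b, rfl⟩ := mkM_surjective n b
  obtain ⟨c, rfl⟩ := mkM_surjective n c
  obtain ⟨d, rfl⟩ := mkM_surjective n d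
  have h : (⁅⁅mkM n a, mkM n b⁆, ⁅mkM n c, mkM n d⁆⁆ : M n)
      = mkM n ⁅⁅a, b⁆, ⁅c, d⁆⁆ := rfl
  rw [h]
  have hmem : (⁅⁅a, b⁆, ⁅c, d⁆⁆ : FreeLieAlgebra ℤ (Fin n)) ∈
      LieAlgebra.derivedSeries ℤ (FreeLieAlgebra ℤ (Fin n)) 2 := by
    have h1 : ∀ x y : FreeLieAlgebra ℤ (Fin n),
        ⁅x, y⁆ ∈ LieAlgebra.derivedSeries ℤ (FreeLieAlgebra ℤ (Fin n)) 1 := by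
      intro x y
      rw [LieAlgebra.derivedSeries_def, show (1 : ℕ) = 0 + 1 from rfl,
        LieAlgebra.derivedSeriesOfIdeal_succ, LieAlgebra.derivedSeriesOfIdeal_zero]
      exact LieSubmodule.lie_mem_lie (LieSubmodule.mem_top x) (LieSubmodule.mem_top y)
    rw [LieAlgebra.derivedSeries_def, show (2 : ℕ) = 1 + 1 from rfl,
      LieAlgebra.derivedSeriesOfIdeal_succ]
    exact LieSubmodule.lie_mem_lie (h1 a b) (h1 c d)
  exact (LieSubmodule.Quotient.mk_eq_zero _).mpr hmem

section Descend

attribute [local instance 2000] LieAlgebra.toModule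

variable {n : ℕ} {A : Type} [LieRing A] [LieAlgebra ℤ A]

lemma theta_kills (hA : ∀ a b c d : A, ⁅⁅a, b⁆, ⁅c, d⁆⁆ = 0)
    (θ : FreeLieAlgebra ℤ (Fin n) →ₗ⁅ℤ⁆ A) :
    ∀ x ∈ LieAlgebra.derivedSeries ℤ (FreeLieAlgebra ℤ (Fin n)) 2, θ x = 0 := by
  intro x hx
  have hbot : LieAlgebra.derivedSeries ℤ A 2 = ⊥ := by
    rw [LieAlgebra.derivedSeries_def, show (2 : ℕ) = 1 + 1 from rfl,
      LieAlgebra.derivedSeriesOfIdeal_succ, eq_bot_iff, LieSubmodule.lie_le_iff]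
    intro u hu v hv
    rw [LieSubmodule.mem_bot]
    rw [show (1 : ℕ) = 0 + 1 from rfl, LieAlgebra.derivedSeriesOfIdeal_succ,
      LieAlgebra.derivedSeriesOfIdeal_zero, ← LieSubmodule.mem_toSubmodule,
      LieSubmodule.lieIdeal_oper_eq_linear_span'] at hu hv
    induction hu using Submodule.span_induction with
    | mem m hm =>
      obtain ⟨a, -, b, -, rfl⟩ := hm
      induction hv using Submodule.span_induction with
      | mem m' hm' => obtain ⟨c, -, d, -, rfl⟩ := hm'; exact hA a b c d
      | zero => exact lie_zero _
      | add y z _ _ hy hz => rw [lie_add, hy, hz, add_zero]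
      | smul t y _ hy => rw [lie_smul, hy]; simp
    | zero => exact zero_lie _
    | add y z _ _ hy hz => rw [add_lie, hy, hz, add_zero]
    | smul t y _ hy => rw [smul_lie, hy]; simp
  have hmap : θ x ∈ (LieAlgebra.derivedSeries ℤ (FreeLieAlgebra ℤ (Fin n)) 2).map θ :=
    LieIdeal.mem_map hx
  have hle := LieIdeal.derivedSeries_map_le (f := θ) 2
  have := hle hmap
  rw [hbot, LieSubmodule.mem_bot] at this
  exact this

noncomputable def descendLin (hA : ∀ a b c d : A, ⁅⁅a, b⁆, ⁅c, d⁆⁆ = 0)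
    (θ : FreeLieAlgebra ℤ (Fin n) →ₗ⁅ℤ⁆ A) : M n →ₗ[ℤ] A :=
  Submodule.liftQ
    (LieAlgebra.derivedSeries ℤ (FreeLieAlgebra ℤ (Fin n)) 2).toSubmodule
    θ.toLinearMap
    (fun x hx => LinearMap.mem_ker.mpr (theta_kills hA θ x hx))

lemma descendLin_mk (hA : ∀ a b c d : A, ⁅⁅a, b⁆, ⁅c, d⁆⁆ = 0)
    (θ : FreeLieAlgebra ℤ (Fin n) →ₗ⁅ℤ⁆ A) (w : FreeLieAlgebra ℤ (Fin n)) :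
    descendLin hA θ (mkM n w) = θ w := rfl

noncomputable def descend (hA : ∀ a b c d : A, ⁅⁅a, b⁆, ⁅c, d⁆⁆ = 0)
    (θ : FreeLieAlgebra ℤ (Fin n) →ₗ⁅ℤ⁆ A) : M n →ₗ⁅ℤ⁆ A where
  toLinearMap := descendLin hA θ
  map_lie' := by
    intro x y
    obtain ⟨x, rfl⟩ := mkM_surjective n x
    obtain ⟨y, rfl⟩ := mkM_surjective n y
    have hb : (⁅mkM n x, mkM n y⁆ : M n) = mkM n ⁅x, y⁆ := rfl
    show descendLin hA θ ⁅mkM n x, mkM n y⁆ =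
      ⁅descendLin hA θ (mkM n x), descendLin hA θ (mkM n y)⁆
    rw [hb, descendLin_mk, descendLin_mk, descendLin_mk, LieHom.map_lie]

lemma descend_mk (hA : ∀ a b c d : A, ⁅⁅a, b⁆, ⁅c, d⁆⁆ = 0)
    (θ : FreeLieAlgebra ℤ (Fin n) →ₗ⁅ℤ⁆ A) (w : FreeLieAlgebra ℤ (Fin n)) :
    descend hA θ (mkM n w) = θ w := rfl

end Descend

lemma chain_rule (n : ℕ) (D : M n → Fin n → MvPolynomial (Fin n) ℤ) (hD : IsDeriv n D)
    (Θ : FreeLieAlgebra ℤ (Fin n) →ₗ⁅ℤ⁆ FreeLieAlgebra ℤ (Fin n))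
    (t : Fin n → Fin n → FreeAlgebra ℤ (Fin n))
    (ht : ∀ j, ω n (Θ (FreeLieAlgebra.of ℤ j)) = ∑ i, FreeAlgebra.ι ℤ i * t i j)
    (w : FreeLieAlgebra ℤ (Fin n)) (e : Fin n → FreeAlgebra ℤ (Fin n))
    (he : ω n w = ∑ j, FreeAlgebra.ι ℤ j * e j) (i : Fin n) :
    D (mkM n (Θ w)) i = ∑ j, φ' n (t i j) *
      MvPolynomial.aeval (fun j' => φ' n (ω n (Θ (FreeLieAlgebra.of ℤ j')))) (φ' n (e j)) := by
  classical
  set Θhat : FreeAlgebra ℤ (Fin n) →ₐ[ℤ] FreeAlgebra ℤ (Fin n) :=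
    FreeAlgebra.lift ℤ (fun j => ω n (Θ (FreeLieAlgebra.of ℤ j))) with hΘhat
  set σ : MvPolynomial (Fin n) ℤ →ₐ[ℤ] MvPolynomial (Fin n) ℤ :=
    MvPolynomial.aeval (fun j' => φ' n (ω n (Θ (FreeLieAlgebra.of ℤ j')))) with hσ
  have step1 : ∀ u, ω n (Θ u) = Θhat (ω n u) := by
    have hh : (ω n).comp Θ = (Θhat.toLieHom).comp (ω n) := by
      apply FreeLieAlgebra.hom_ext
      intro x
      show ω n (Θ (FreeLieAlgebra.of ℤ x)) = Θhat.toLieHom (ω n (FreeLieAlgebra.of ℤ x))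
      rw [show ω n (FreeLieAlgebra.of ℤ x) = FreeAlgebra.ι ℤ x from
        FreeLieAlgebra.lift_of_apply _ _]
      rw [show Θhat.toLieHom (FreeAlgebra.ι ℤ x) = Θhat (FreeAlgebra.ι ℤ x) from rfl,
        hΘhat, FreeAlgebra.lift_ι_apply]
    intro u
    exact LieHom.congr_fun hh u
  have step2 : ∀ a, φ' n (Θhat a) = σ (φ' n a) := by
    have hh : (φ' n).comp Θhat = σ.comp (φ' n) := by
      apply FreeAlgebra.hom_ext
      funext x
      show φ' n (Θhat (FreeAlgebra.ι ℤ x)) = σ (φ' n (FreeAlgebra.ι ℤ x))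
      rw [hΘhat, FreeAlgebra.lift_ι_apply,
        show φ' n (FreeAlgebra.ι ℤ x) = MvPolynomial.X x from FreeAlgebra.lift_ι_apply _ _,
        hσ, MvPolynomial.aeval_X]
    intro a
    exact AlgHom.congr_fun hh a
  have key : ω n (Θ w) = ∑ i', FreeAlgebra.ι ℤ i' * (∑ j, t i' j * Θhat (e j)) := by
    rw [step1, he, map_sum]
    have hterm : ∀ j, Θhat (FreeAlgebra.ι ℤ j * e j)
        = ∑ i', FreeAlgebra.ι ℤ i' * (t i' j * Θhat (e j)) := by
      intro j
      rw [map_mul, hΘhat, FreeAlgebra.lift_ι_apply, ← hΘhat, ht j, Finset.sum_mul]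
      simp [mul_assoc]
    rw [Finset.sum_congr rfl fun j _ => hterm j, Finset.sum_comm]
    simp [Finset.mul_sum]
  have hDval := hD (Θ w) (fun i' => ∑ j, t i' j * Θhat (e j)) key
  rw [hDval]
  simp only [map_sum, map_mul]
  refine Finset.sum_congr rfl fun j _ => ?_
  rw [step2 (e j)]

/-- `h` is a system of free generators of the free metabelian Lie ring `M`: every map
from `h` to a metabelian Lie ring extends uniquely to a Lie ring homomorphism. -/
def IsFreeGenSet (n : ℕ) (h : Fin n → M n) : Prop :=
  ∀ (A : Type) [LieRing A] [LieAlgebra ℤ A],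
    (∀ a b c d : A, ⁅⁅a,b⁆,⁅c,d⁆⁆ = 0) →
      ∀ f : Fin n → A, ∃! φ : M n →ₗ⁅ℤ⁆ A, ∀ i, φ (h i) = f i

/-- If `g₁,…,gₙ` is a system of free generators of the free metabelian
Lie ring `M`, then `det J(g₁,…,gₙ) = ±1` in `ℤ[x₁,…,xₙ]`. -/
theorem det_jacobi_of_free_generators (n : ℕ) (g : Fin n → M n)
    (hg : IsFreeGenSet n g)
    (D : M n → Fin n → MvPolynomial (Fin n) ℤ) (hD : IsDeriv n D) :
    (Matrix.of fun i j => D (g j) i).det = 1 ∨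
      (Matrix.of fun i j => D (g j) i).det = -1 := by
  classical
  obtain ⟨φm, hφm, -⟩ := hg (M n) (M_metabelian n) (fun i => mkM n (FreeLieAlgebra.of ℤ i))
  choose G hG using fun i => mkM_surjective n (g i)
  choose H hH using fun i => mkM_surjective n (φm (mkM n (FreeLieAlgebra.of ℤ i)))
  set Ψ : FreeLieAlgebra ℤ (Fin n) →ₗ⁅ℤ⁆ FreeLieAlgebra ℤ (Fin n) :=
    FreeLieAlgebra.lift ℤ G with hΨ
  set ψM : M n →ₗ⁅ℤ⁆ M n := descend (M_metabelian n) ((mkL n).comp Ψ) with hψM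
  have hψMmk : ∀ w, ψM (mkM n w) = mkM n (Ψ w) := fun w => descend_mk _ _ w
  have hψMg : ∀ i, ψM (mkM n (FreeLieAlgebra.of ℤ i)) = g i := by
    intro i
    rw [hψMmk, show Ψ (FreeLieAlgebra.of ℤ i) = G i from FreeLieAlgebra.lift_of_apply _ _]
    exact hG i
  have hid : ∀ x : M n, ψM (φm x) = x := by
    obtain ⟨χ, hχ, huniq⟩ := hg (M n) (M_metabelian n) g
    have h1 : ψM.comp φm = χ := huniq _ (fun i => by
      simp only [LieHom.comp_apply, hφm i, hψMg i])
    have h2 : (LieHom.id : M n →ₗ⁅ℤ⁆ M n) = χ := huniq _ (fun i => rfl)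
    intro x
    exact congrArg (fun f : M n →ₗ⁅ℤ⁆ M n => f x) (h1.trans h2.symm)
  choose dG hdG using fun j => exists_decomp n (G j)
  choose dH hdH using fun k => exists_decomp n (H k)
  set σ : MvPolynomial (Fin n) ℤ →ₐ[ℤ] MvPolynomial (Fin n) ℤ :=
    MvPolynomial.aeval (fun j' => φ' n (ω n (Ψ (FreeLieAlgebra.of ℤ j')))) with hσ
  have key : ∀ k i, (if i = k then (1 : MvPolynomial (Fin n) ℤ) else 0) =
      ∑ j, φ' n (dG j i) * σ (φ' n (dH k j)) := by
    intro k i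
    have hcr := chain_rule n D hD Ψ (fun i j => dG j i)
      (fun j => by rw [show Ψ (FreeLieAlgebra.of ℤ j) = G j from FreeLieAlgebra.lift_of_apply _ _]; exact hdG j)
      (H k) (dH k) (hdH k) i
    have hx : mkM n (Ψ (H k)) = mkM n (FreeLieAlgebra.of ℤ k) := by
      rw [← hψMmk, hH k, hid]
    rw [hx] at hcr
    have hone := hD (FreeLieAlgebra.of ℤ k) (fun i => if i = k then 1 else 0)
      (single_decomp n k)
    rw [hone] at hcr
    rw [← hσ] at hcr
    rw [← hcr]
    by_cases h : i = k <;> simp [h]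
  set J : Matrix (Fin n) (Fin n) (MvPolynomial (Fin n) ℤ) :=
    Matrix.of fun i j => D (g j) i with hJ
  have hJ' : ∀ i j, J i j = φ' n (dG j i) := by
    intro i j
    have h := hD (G j) (dG j) (hdG j)
    show D (g j) i = _
    rw [← hG j, h]
  set K : Matrix (Fin n) (Fin n) (MvPolynomial (Fin n) ℤ) :=
    Matrix.of fun j k => σ (φ' n (dH k j)) with hK
  have hmat : J * K = 1 := by
    refine Matrix.ext fun i k => ?_
    have hterm : ∀ j, J i j * K j k = φ' n (dG j i) * σ (φ' n (dH k j)) := by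
      intro j
      rw [hJ' i j]
      rfl
    rw [Matrix.mul_apply, Matrix.one_apply, key k i]
    exact Finset.sum_congr rfl fun j _ => hterm j
  have hunit : IsUnit J.det :=
    IsUnit.of_mul_eq_one (a := J.det) K.det (by rw [← Matrix.det_mul, hmat, Matrix.det_one])
  exact mvpoly_int_unit J.det hunit
end

section
/- For any nontrivial finitely generated commutative ring quotient Z[x_1,...,x_n]/I, there exist positive integers p, q, m with m ≥ 2 and a surjective ring homomorphism θ : Z[X]/⟨m, x_i^p(x_i^q−1) : i⟩ → R onto a nontrivial finite quotient R of Z[X]/I, sending each x_i to its image in R. -/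
/-- The ideal `I_{p,q,m} = ⟨m, xᵢᵖ(xᵢ^q − 1)⟩` of `ℤ[x₁,…,xₙ]`. -/
noncomputable def Ipqm (n p q m : ℕ) : Ideal (MvPolynomial (Fin n) ℤ) :=
  Ideal.span ({(m : MvPolynomial (Fin n) ℤ)} ∪
    Set.range fun i : Fin n => MvPolynomial.X i ^ p * (MvPolynomial.X i ^ q - 1))

private lemma pow_stab {M : Type*} [Monoid M] (x : M) {a d : ℕ} (h : x ^ a = x ^ (a + d)) :
    ∀ b, a ≤ b → ∀ c, x ^ b = x ^ (b + d * c) := by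
  have key : ∀ b, a ≤ b → x ^ b = x ^ (b + d) := by
    intro b hb
    obtain ⟨e, rfl⟩ := Nat.exists_eq_add_of_le hb
    calc x ^ (a + e) = x ^ a * x ^ e := by rw [pow_add]
    _ = x ^ (a + d) * x ^ e := by rw [h]
    _ = x ^ (a + e + d) := by rw [← pow_add]; ring_nf
  intro b hb c
  induction c with
  | zero => simp
  | succ c ih =>
      calc x ^ b = x ^ (b + d * c) := ih
      _ = x ^ (b + d * c + d) := key _ (le_trans hb (Nat.le_add_right _ _))
      _ = x ^ (b + d * (c + 1)) := by ring_nf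

private lemma exists_pow_eq_pow_add {M : Type*} [Monoid M] [Finite M] (x : M) :
    ∃ a d : ℕ, 0 < a ∧ 0 < d ∧ x ^ a = x ^ (a + d) := by
  obtain ⟨s, t, hst, h⟩ := Finite.exists_ne_map_eq_of_infinite (fun t : ℕ => x ^ (t + 1))
  rcases Nat.lt_or_ge s t with hlt | hge
  · exact ⟨s + 1, t - s, Nat.succ_pos _, Nat.sub_pos_of_lt hlt, by
      simpa [Nat.add_sub_cancel' hlt.le, Nat.add_comm, Nat.add_assoc, Nat.add_left_comm,
        show s + 1 + (t - s) = t + 1 by omega] using h⟩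
  · have hlt : t < s := lt_of_le_of_ne hge hst.symm
    exact ⟨t + 1, s - t, Nat.succ_pos _, Nat.sub_pos_of_lt hlt, by
      simpa [show t + 1 + (s - t) = s + 1 by omega] using h.symm⟩

private instance : IsJacobsonRing ℤ := by
  refine isJacobsonRing_iff_prime_eq.mpr fun P hP => ?_
  by_cases hbot : P = ⊥
  · subst hbot
    refine le_antisymm (fun x hx => ?_) Ideal.le_jacobson
    rw [Ideal.mem_jacobson_bot] at hx
    have := hx x
    rw [Int.isUnit_iff] at this
    have hx2 : x * x + 1 = 1 := by
      rcases this with h | h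
      · exact h
      · nlinarith [mul_self_nonneg x]
    have : x = 0 := by nlinarith [mul_self_nonneg x]
    simp [this]
  · haveI := hP
    haveI := IsPrime.to_maximal_ideal hbot
    exact Ideal.jacobson_eq_self_of_isMaximal

/-- For any nontrivial finitely generated quotient `ℤ[x₁,…,xₙ]/I`,
there are positive integers `p, q, m` with `m ≥ 2`, a nontrivial finite quotient
`R = ℤ[X]/J` of `ℤ[X]/I` (i.e. `I ≤ J`), and a surjective ring homomorphism
`θ : ℤ[X]/I_{p,q,m} → R` sending each `xᵢ` to its image in `R`. -/
theorem exists_finite_quotient_through_Ipqm (n : ℕ) (I : Ideal (MvPolynomial (Fin n) ℤ))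
    (hI : Nontrivial (MvPolynomial (Fin n) ℤ ⧸ I)) :
    ∃ (p q m : ℕ), 0 < p ∧ 0 < q ∧ 2 ≤ m ∧
      ∃ J : Ideal (MvPolynomial (Fin n) ℤ), I ≤ J ∧
        Nontrivial (MvPolynomial (Fin n) ℤ ⧸ J) ∧
        Finite (MvPolynomial (Fin n) ℤ ⧸ J) ∧
        ∃ θ : (MvPolynomial (Fin n) ℤ ⧸ Ipqm n p q m) →+*
              (MvPolynomial (Fin n) ℤ ⧸ J),
          Function.Surjective θ ∧
          ∀ f : MvPolynomial (Fin n) ℤ,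
            θ (Ideal.Quotient.mk (Ipqm n p q m) f) = Ideal.Quotient.mk J f := by
  classical
  set A := MvPolynomial (Fin n) ℤ with hA
  have hInetop : I ≠ ⊤ := by
    intro h
    haveI : Subsingleton (A ⧸ I) := Ideal.Quotient.subsingleton_iff.mpr h
    exact false_of_nontrivial_of_subsingleton (A ⧸ I)
  obtain ⟨J, hJmax, hIJ⟩ := Ideal.exists_le_maximal I hInetop
  letI : Field (A ⧸ J) := Ideal.Quotient.field J
  haveI : Algebra.FiniteType ℤ (A ⧸ J) :=
    Algebra.FiniteType.of_surjective
      (Ideal.Quotient.mkₐ ℤ J) (Ideal.Quotient.mkₐ_surjective ℤ J)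
  haveI : Module.Finite ℤ (A ⧸ J) := finite_of_finite_type_of_isJacobsonRing ℤ (A ⧸ J)
  set m := ringChar (A ⧸ J) with hm
  haveI hchar : CharP (A ⧸ J) m := ringChar.charP _
  have hm0 : m ≠ 0 := by
    intro h0
    haveI : CharP (A ⧸ J) 0 := h0 ▸ hchar
    haveI : CharZero (A ⧸ J) := CharP.charP_to_charZero _
    have hinj : Function.Injective (algebraMap ℤ (A ⧸ J)) := by
      exact (algebraMap ℤ (A ⧸ J)).injective_int
    exact Int.not_isField
      ((Algebra.IsIntegral.isField_iff_isField hinj).mpr (Field.toIsField _))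
  have hm1 : m ≠ 1 := CharP.ringChar_ne_one
  -- finiteness of the quotient
  haveI : NeZero m := ⟨hm0⟩
  letI : Algebra (ZMod m) (A ⧸ J) := ZMod.algebra _ m
  haveI : IsScalarTower ℤ (ZMod m) (A ⧸ J) :=
    IsScalarTower.of_algebraMap_eq fun x => by
      simp [RingHom.congr_fun
        (Subsingleton.elim (algebraMap ℤ (A ⧸ J))
          ((algebraMap (ZMod m) (A ⧸ J)).comp (algebraMap ℤ (ZMod m)))) x]
  haveI : Module.Finite (ZMod m) (A ⧸ J) :=
    Module.Finite.of_restrictScalars_finite ℤ (ZMod m) (A ⧸ J)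
  haveI hfin : Finite (A ⧸ J) := Module.finite_of_finite (ZMod m)
  -- exponents
  set r : Fin n → (A ⧸ J) := fun i => Ideal.Quotient.mk J (MvPolynomial.X i) with hr
  have h := fun i => exists_pow_eq_pow_add (r i)
  choose a d ha hd hpow using h
  set p : ℕ := (Finset.univ.sup a) + 1 with hp
  set q : ℕ := ∏ i : Fin n, d i with hq
  have hq0 : 0 < q := Finset.prod_pos fun i _ => hd i
  have hpq : ∀ i, (r i) ^ p = (r i) ^ (p + q) := by
    intro i
    obtain ⟨c, hc⟩ : d i ∣ q := Finset.dvd_prod_of_mem d (Finset.mem_univ i)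
    rw [hc]
    exact pow_stab (r i) (hpow i) p
      (le_trans (Finset.le_sup (Finset.mem_univ i)) (Nat.le_succ _)) c
  -- the ideal inclusion
  have hle : Ipqm n p q m ≤ J := by
    rw [Ipqm, Ideal.span_le]
    rintro x (hx | ⟨i, rfl⟩)
    · rw [Set.mem_singleton_iff] at hx
      subst hx
      rw [SetLike.mem_coe, ← Ideal.Quotient.eq_zero_iff_mem, map_natCast]
      exact CharP.cast_eq_zero _ m
    · rw [SetLike.mem_coe, ← Ideal.Quotient.eq_zero_iff_mem]
      have : Ideal.Quotient.mk J (MvPolynomial.X i ^ p * (MvPolynomial.X i ^ q - 1))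
          = (r i) ^ p * ((r i) ^ q - 1) := by
        simp [hr]
      rw [this, mul_sub, mul_one, ← pow_add, ← hpq i, sub_self]
  refine ⟨p, q, m, Nat.succ_pos _, hq0, ?_, J, hIJ, inferInstance, hfin,
    Ideal.Quotient.factor hle, ?_, fun f => Ideal.Quotient.factor_mk hle f⟩
  · omega
  · intro y
    obtain ⟨f, rfl⟩ := Ideal.Quotient.mk_surjective y
    exact ⟨Ideal.Quotient.mk _ f, Ideal.Quotient.factor_mk hle f⟩
end

section
/- In the matrix Lie ring M_{p,q,m} of 2×2 matrices of the form [[l, 0],[τ, 0]] with l ∈ Z_{p,q,m}[X] and τ in a free rank-n Z_{p,q,m}[X]-module T, with bracket [S_1,S_2] = S_1S_2 − S_2S_1, the substitution formula holds: for any Lie polynomial g of the free metabelian Lie ring and matrices S_i = [[s_i,0],[τ_i,0]], one has g(S_1,...,S_n) = [[ḡ(s_1,...,s_n), 0],[Σ_{i=1}^n τ_i · ∂̄_i g(s_1,...,s_n), 0]], where ḡ is the linear part of g and ∂̄_i g are the reduced partial derivatives. -/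
open TrivSqZeroExt

set_option maxHeartbeats 1000000
set_option synthInstance.maxHeartbeats 400000

attribute [local instance 100] LieRing.ofAssociativeRing

/-- The finite quotient ring `ℤ_{p,q,m}[X]`. -/
abbrev Rpqm (n p q m : ℕ) := MvPolynomial (Fin n) ℤ ⧸ Ipqm n p q m

/-- Entries for the `2 × 2` matrices over `ℤ_{p,q,m}[X]`, packaging the scalar slot and
the free rank-`n` module slot `T_{p,q,m}` as a square-zero extension. -/
abbrev MatEntry (n p q m : ℕ) :=
  TrivSqZeroExt (Rpqm n p q m) (Fin n → Rpqm n p q m)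

/-- The matrix `Sᵢ = [[sᵢ, 0], [τᵢ, 0]]`. -/
noncomputable def Smat (n p q m : ℕ) (s : Fin n → Rpqm n p q m)
    (τ : Fin n → (Fin n → Rpqm n p q m)) (i : Fin n) :
    Matrix (Fin 2) (Fin 2) (MatEntry n p q m) :=
  Matrix.of ![![inl (s i), 0], ![inr (τ i), 0]]

/-- The associative substitution homomorphism sending `ι i` to `Sᵢ`. -/
noncomputable def ψaux (n p q m : ℕ) (s : Fin n → Rpqm n p q m)
    (τ : Fin n → (Fin n → Rpqm n p q m)) :
    FreeAlgebra ℤ (Fin n) →ₐ[ℤ] Matrix (Fin 2) (Fin 2) (MatEntry n p q m) :=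
  FreeAlgebra.lift ℤ (Smat n p q m s τ)

/-- Structure of `ψaux u`: `(0,0)` entry is `inl (e u)`, `(0,1)` entry vanishes, and
the `(1,0)` entry has zero scalar part. -/
theorem Smat00 (n p q m : ℕ) (s : Fin n → Rpqm n p q m)
    (τ : Fin n → (Fin n → Rpqm n p q m)) (i : Fin n) :
    Smat n p q m s τ i 0 0 = inl (s i) := rfl

theorem Smat01 (n p q m : ℕ) (s : Fin n → Rpqm n p q m)
    (τ : Fin n → (Fin n → Rpqm n p q m)) (i : Fin n) :
    Smat n p q m s τ i 0 1 = 0 := rfl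

theorem Smat10 (n p q m : ℕ) (s : Fin n → Rpqm n p q m)
    (τ : Fin n → (Fin n → Rpqm n p q m)) (i : Fin n) :
    Smat n p q m s τ i 1 0 = inr (τ i) := rfl

theorem Smat11 (n p q m : ℕ) (s : Fin n → Rpqm n p q m)
    (τ : Fin n → (Fin n → Rpqm n p q m)) (i : Fin n) :
    Smat n p q m s τ i 1 1 = 0 := rfl

/-- Structure of `ψaux u`: `(0,0)` entry is `inl (e u)`, `(0,1)` entry vanishes, and
the `(1,0)` entry has zero scalar part. -/
theorem psi_struct (n p q m : ℕ) (s : Fin n → Rpqm n p q m)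
    (τ : Fin n → (Fin n → Rpqm n p q m)) (u : FreeAlgebra ℤ (Fin n)) :
    ψaux n p q m s τ u 0 0 = inl (FreeAlgebra.lift ℤ s u) ∧
      ψaux n p q m s τ u 0 1 = 0 ∧ (ψaux n p q m s τ u 1 0).fst = 0 := by
  induction u using FreeAlgebra.induction with
  | grade0 r =>
      rw [AlgHom.commutes, AlgHom.commutes]
      refine ⟨?_, ?_, ?_⟩
      · rw [Matrix.algebraMap_matrix_apply, if_pos rfl, TrivSqZeroExt.algebraMap_eq_inl']
      · rw [Matrix.algebraMap_matrix_apply, if_neg (by decide)]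
      · rw [Matrix.algebraMap_matrix_apply, if_neg (by decide), fst_zero]
  | grade1 i =>
      rw [show (ψaux n p q m s τ) (FreeAlgebra.ι ℤ i) = Smat n p q m s τ i from
        FreeAlgebra.lift_ι_apply _ i, FreeAlgebra.lift_ι_apply]
      exact ⟨Smat00 n p q m s τ i, Smat01 n p q m s τ i, by rw [Smat10]; exact fst_inr _ _⟩
  | mul a b ha hb =>
      obtain ⟨ha0, ha1, ha2⟩ := ha
      obtain ⟨hb0, hb1, hb2⟩ := hb
      refine ⟨?_, ?_, ?_⟩
      · rw [map_mul, Matrix.mul_apply, Fin.sum_univ_two, ha0, ha1, hb0, zero_mul,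
          add_zero, map_mul]
        exact inl_mul_inl (Fin n → Rpqm n p q m) (FreeAlgebra.lift ℤ s a)
          (FreeAlgebra.lift ℤ s b)
      · rw [map_mul, Matrix.mul_apply, Fin.sum_univ_two, ha0, ha1, hb1, zero_mul,
          mul_zero, add_zero]
      · rw [map_mul, Matrix.mul_apply, Fin.sum_univ_two, hb0, fst_add, fst_mul,
          fst_mul, ha2, zero_mul, hb2, mul_zero, add_zero]
  | add a b ha hb =>
      obtain ⟨ha0, ha1, ha2⟩ := ha
      obtain ⟨hb0, hb1, hb2⟩ := hb
      refine ⟨?_, ?_, ?_⟩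
      · rw [map_add, Matrix.add_apply, ha0, hb0, ← inl_add, map_add]
      · rw [map_add, Matrix.add_apply, ha1, hb1, add_zero]
      · rw [map_add, Matrix.add_apply, fst_add, ha2, hb2, add_zero]

theorem eval_eq (n p q m : ℕ) (s : Fin n → Rpqm n p q m) :
    (FreeAlgebra.lift ℤ s : FreeAlgebra ℤ (Fin n) →ₐ[ℤ] Rpqm n p q m) =
      (MvPolynomial.aeval s).comp (φ' n) := by
  apply FreeAlgebra.hom_ext
  funext i
  simp [φ', FreeAlgebra.lift_ι_apply]

/-- **substitution formula.** For any Lie polynomial `g` and matrices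
`Sᵢ = [[sᵢ,0],[τᵢ,0]]` in the metabelian matrix Lie ring `M_{p,q,m}`,
`g(S₁,…,Sₙ) = [[ḡ(s₁,…,sₙ), 0], [∑ᵢ τᵢ·∂̄ᵢg(s₁,…,sₙ), 0]]`, where `ḡ` is the linear part
of `g` and `∂̄ᵢ g` the reduced partial derivatives evaluated at `s₁,…,sₙ`. -/
theorem substitution_formula (n p q m : ℕ) (hp : 0 < p) (hq : 0 < q) (hm : 2 ≤ m)
    (s : Fin n → Rpqm n p q m) (τ : Fin n → (Fin n → Rpqm n p q m))
    (g : FreeLieAlgebra ℤ (Fin n)) (d : Fin n → FreeAlgebra ℤ (Fin n))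
    (hd : ω n g = ∑ i, FreeAlgebra.ι ℤ i * d i) :
    (FreeLieAlgebra.lift ℤ (Smat n p q m s τ)) g =
      Matrix.of ![![inl (MvPolynomial.eval₂Hom (Int.castRingHom (Rpqm n p q m)) s (φ' n (ω n g))), 0],
        ![inr (∑ i, MvPolynomial.eval₂Hom (Int.castRingHom (Rpqm n p q m)) s
            (φ' n (d i)) • τ i), 0]] := by
  classical
  have heval : ∀ u : FreeAlgebra ℤ (Fin n),
      MvPolynomial.eval₂Hom (Int.castRingHom (Rpqm n p q m)) s (φ' n u) =
        FreeAlgebra.lift ℤ s u := by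
    intro u
    have h1 : MvPolynomial.eval₂Hom (Int.castRingHom (Rpqm n p q m)) s (φ' n u) =
        MvPolynomial.aeval s (φ' n u) := by
      rw [MvPolynomial.aeval_def]
      rfl
    rw [h1, eval_eq n p q m s]
    rfl
  -- the Lie lift factors through `ψ ∘ ω`
  have key : (FreeLieAlgebra.lift ℤ (Smat n p q m s τ)) g = ψaux n p q m s τ (ω n g) := by
    have h2 : (FreeLieAlgebra.lift ℤ (Smat n p q m s τ)) =
        ((ψaux n p q m s τ).toLieHom.comp (ω n)) := by
      apply FreeLieAlgebra.hom_ext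
      intro i
      simp only [FreeLieAlgebra.lift_of_apply, LieHom.comp_apply]
      show Smat n p q m s τ i = ψaux n p q m s τ (ω n (FreeLieAlgebra.of ℤ i))
      rw [show ω n (FreeLieAlgebra.of ℤ i) = FreeAlgebra.ι ℤ i from
        FreeLieAlgebra.lift_of_apply _ i]
      exact (FreeAlgebra.lift_ι_apply (Smat n p q m s τ) i).symm
    rw [h2]; rfl
  rw [key, hd, map_sum]
  have hψι : ∀ i, ψaux n p q m s τ (FreeAlgebra.ι ℤ i * d i) =
      Smat n p q m s τ i * ψaux n p q m s τ (d i) := by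
    intro i
    rw [map_mul]
    congr 1
    exact FreeAlgebra.lift_ι_apply (Smat n p q m s τ) i
  simp only [hψι]
  refine Matrix.ext fun a b => ?_
  rw [Matrix.sum_apply]
  have hstruct := fun i => psi_struct n p q m s τ (d i)
  fin_cases a <;> fin_cases b <;>
    simp only [Fin.zero_eta, Fin.mk_one, Matrix.of_apply, Matrix.cons_val', Matrix.cons_val_zero,
      Matrix.cons_val_one, Matrix.head_cons, Matrix.empty_val', Matrix.cons_val_fin_one]
  · -- (0,0)
    have h3 : ∀ i, (Smat n p q m s τ i * ψaux n p q m s τ (d i)) 0 0 =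
        inl (s i * FreeAlgebra.lift ℤ s (d i)) := by
      intro i
      rw [Matrix.mul_apply, Fin.sum_univ_two, (hstruct i).1, Smat00, Smat01,
        zero_mul, add_zero]
      exact inl_mul_inl (Fin n → Rpqm n p q m) (s i) (FreeAlgebra.lift ℤ s (d i))
    rw [Finset.sum_congr rfl fun i _ => h3 i]
    have h4 : FreeAlgebra.lift ℤ s (∑ i, FreeAlgebra.ι ℤ i * d i) =
        ∑ i, s i * FreeAlgebra.lift ℤ s (d i) := by
      rw [map_sum]
      exact Finset.sum_congr rfl fun i _ => by rw [map_mul, FreeAlgebra.lift_ι_apply]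
    rw [heval, h4]
    exact (inl_sum (M := Fin n → Rpqm n p q m) _ _).symm
  · -- (0,1)
    have h3 : ∀ i, (Smat n p q m s τ i * ψaux n p q m s τ (d i)) 0 1 = 0 := by
      intro i
      rw [Matrix.mul_apply, Fin.sum_univ_two, (hstruct i).2.1, Smat01, mul_zero,
        zero_mul, add_zero]
    rw [Finset.sum_congr rfl fun i _ => h3 i, Finset.sum_const_zero]
  · -- (1,0)
    have h3 : ∀ i, (Smat n p q m s τ i * ψaux n p q m s τ (d i)) 1 0 =
        inr (FreeAlgebra.lift ℤ s (d i) • τ i) := by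
      intro i
      rw [Matrix.mul_apply, Fin.sum_univ_two, (hstruct i).1, Smat10, Smat11,
        zero_mul, add_zero]
      exact (inr_mul_inl (R := Rpqm n p q m) (M := Fin n → Rpqm n p q m) _ _).trans
        (congrArg (inr (R := Rpqm n p q m)) (op_smul_eq_smul _ _))
    rw [Finset.sum_congr rfl fun i _ => h3 i]
    simp only [heval]
    exact (inr_sum (R := Rpqm n p q m) _ _).symm
  · -- (1,1)
    have h3 : ∀ i, (Smat n p q m s τ i * ψaux n p q m s τ (d i)) 1 1 = 0 := by
      intro i
      rw [Matrix.mul_apply, Fin.sum_univ_two, (hstruct i).2.1, Smat11, mul_zero,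
        zero_mul, add_zero]
    rw [Finset.sum_congr rfl fun i _ => h3 i, Finset.sum_const_zero]
end

section
/- If a system {g_1,...,g_k} of elements of the free metabelian Lie ring M is uniformly distributed on the variety of metabelian Lie rings, then no g_i lies in the derived subalgebra M', and the images ḡ_1,...,ḡ_k of g_1,...,g_k under the natural map M → M/M' form a primitive system in the free abelian Lie ring M/M' (i.e. extend to a basis of the free abelian group of rank n). -/
attribute [local instance 100] LieRing.ofAssociativeRing
/-- A system of Lie polynomials `g₁,…,g_k` is uniformly distributed on the variety of
metabelian Lie rings: for every finite metabelian Lie ring `R` and every `p ∈ R^k`, the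
number of `r ∈ R^n` with `(g₁(r),…,g_k(r)) = p` equals `|R|^{n−k}`. -/
def IsUniformlyDistributed (n k : ℕ) (g : Fin k → FreeLieAlgebra ℤ (Fin n)) : Prop :=
  ∀ (R : Type) [LieRing R] [LieAlgebra ℤ R] [Fintype R],
    (∀ a b c d : R, ⁅⁅a, b⁆, ⁅c, d⁆⁆ = 0) →
      ∀ pv : Fin k → R,
        Nat.card {r : Fin n → R // ∀ j, (FreeLieAlgebra.lift ℤ r) (g j) = pv j} =
          Fintype.card R ^ (n - k)

/-- The linear part (row of coefficients) of a free Lie algebra element. -/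
noncomputable def rowC (n : ℕ) (x : FreeLieAlgebra ℤ (Fin n)) : Fin n → ℤ :=
  fun i => MvPolynomial.coeff (Finsupp.single i 1) (φ' n (ω n x))

/-- Evaluation of a free Lie algebra element in a commutative ring (viewed as a Lie ring)
is given by the linear part. -/
theorem evalKey (n : ℕ) (R : Type) [CommRing R] (r : Fin n → R)
    (x : FreeLieAlgebra ℤ (Fin n)) :
    FreeLieAlgebra.lift ℤ r x = ∑ i, (rowC n x i : R) * r i := by
  classical
  let T : MvPolynomial (Fin n) ℤ →ₗ⁅ℤ⁆ R :=
    { toFun := fun P => ∑ i, ((MvPolynomial.coeff (Finsupp.single i 1) P : ℤ) : R) * r i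
      map_add' := by
        intro P Q
        rw [← Finset.sum_add_distrib]
        refine Finset.sum_congr rfl fun i _ => ?_
        rw [MvPolynomial.coeff_add]
        push_cast
        ring
      map_smul' := by
        intro t P
        simp only [MvPolynomial.coeff_smul, smul_eq_mul, RingHom.id_apply]
        rw [Finset.smul_sum]
        refine Finset.sum_congr rfl fun i _ => ?_
        rw [zsmul_eq_mul]
        push_cast
        ring
      map_lie' := by
        intro P Q
        have h : ⁅P, Q⁆ = (0 : MvPolynomial (Fin n) ℤ) := by
          rw [LieRing.of_associative_ring_bracket, mul_comm, sub_self]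
        have h' : ∀ a b : R, ⁅a, b⁆ = 0 := by
          intro a b
          rw [LieRing.of_associative_ring_bracket, mul_comm, sub_self]
        rw [h, h']
        simp }
  let Ψ : FreeLieAlgebra ℤ (Fin n) →ₗ⁅ℤ⁆ R := T.comp ((φ' n).toLieHom.comp (ω n))
  have hΨ : ∀ y, Ψ y = ∑ i, ((MvPolynomial.coeff (Finsupp.single i 1) (φ' n (ω n y)) : ℤ) : R)
      * r i := by
    intro y
    rfl
  have hΨof : ∀ i, Ψ (FreeLieAlgebra.of ℤ i) = r i := by
    intro i
    rw [hΨ]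
    have h1 : ω n (FreeLieAlgebra.of ℤ i) = FreeAlgebra.ι ℤ i :=
      FreeLieAlgebra.lift_of_apply _ _
    have h2 : φ' n (FreeAlgebra.ι ℤ i) = MvPolynomial.X i :=
      FreeAlgebra.lift_ι_apply _ _
    rw [h1, h2]
    rw [Finset.sum_eq_single i]
    · simp
    · intro b _ hb
      have : MvPolynomial.coeff (Finsupp.single b 1) (MvPolynomial.X (R := ℤ) i) = 0 := by
        rw [MvPolynomial.coeff_X']
        rw [if_neg]
        intro hcon
        exact hb (Finsupp.single_left_injective one_ne_zero hcon).symm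
      rw [this]
      simp
    · intro h; exact absurd (Finset.mem_univ i) h
  have hlift : FreeLieAlgebra.lift ℤ r = Ψ := by
    have : Ψ ∘ FreeLieAlgebra.of ℤ = r := funext hΨof
    exact ((FreeLieAlgebra.lift_unique r Ψ).mp this).symm
  rw [hlift]
  exact hΨ x

/-- If a system `g₁,…,g_k` of the free metabelian Lie ring is uniformly
distributed on the variety of metabelian Lie rings, then no `gᵢ` lies in the derived
subalgebra, and the images `ḡ₁,…,ḡ_k` under `M → M/M'` form a primitive system in the
free abelian Lie ring `M/M' ≅ ℤⁿ` (they extend to a basis of `ℤⁿ`). -/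
theorem uniformly_distributed_abelianized_primitive (n k : ℕ) (hk1 : 1 ≤ k) (hk : k ≤ n)
    (g : Fin k → FreeLieAlgebra ℤ (Fin n))
    (hu : IsUniformlyDistributed n k g) :
    (∀ j, g j ∉ LieAlgebra.derivedSeries ℤ (FreeLieAlgebra ℤ (Fin n)) 1) ∧
    ∃ b : Module.Basis (Fin n) ℤ (Fin n → ℤ),
      ∀ j : Fin k, b (Fin.castLE hk j) =
        fun i => MvPolynomial.coeff (Finsupp.single i 1) (φ' n (ω n (g j))) := by
  classical
  set Cmat : Matrix (Fin k) (Fin n) ℤ := Matrix.of (fun j i => rowC n (g j) i) with hCmat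
  -- Step 1: surjectivity mod m for every m ≠ 0
  have hmod : ∀ (m : ℕ) [NeZero m] (x : Fin k → ℤ),
      ∃ v : Fin n → ℤ, ∀ j, (((x j - Cmat.mulVec v j : ℤ) : ZMod m) = 0) := by
    intro m _ x
    have hmeta : ∀ a b c d : ZMod m, ⁅⁅a, b⁆, ⁅c, d⁆⁆ = 0 := by
      intro a b c d
      simp [LieRing.of_associative_ring_bracket, mul_comm]
    have hcount := hu (ZMod m) hmeta (fun j => ((x j : ZMod m)))
    have hne : Nat.card {r : Fin n → ZMod m //
        ∀ j, (FreeLieAlgebra.lift ℤ r) (g j) = ((x j : ZMod m))} ≠ 0 := by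
      rw [hcount]
      exact pow_ne_zero _ Fintype.card_ne_zero
    obtain ⟨⟨r, hr⟩⟩ := (Nat.card_ne_zero.mp hne).1
    refine ⟨fun i => ((r i).val : ℤ), fun j => ?_⟩
    have hval := hr j
    rw [evalKey n (ZMod m) r (g j)] at hval
    have hcast : ((Cmat.mulVec (fun i => ((r i).val : ℤ)) j : ℤ) : ZMod m)
        = ∑ i, ((rowC n (g j) i : ℤ) : ZMod m) * r i := by
      rw [Matrix.mulVec, dotProduct]
      push_cast
      refine Finset.sum_congr rfl fun i _ => ?_
      rw [ZMod.natCast_val, ZMod.cast_id]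
      rfl
    push_cast
    rw [hcast, hval]
    ring
  -- Step 2: surjectivity over ℤ
  set f : (Fin n → ℤ) →ₗ[ℤ] (Fin k → ℤ) := Matrix.toLin' Cmat with hf
  have hrange : ∀ (m : ℕ) [NeZero m] (x : Fin k → ℤ),
      ∃ w : Fin k → ℤ, Submodule.Quotient.mk (p := LinearMap.range f) x
        = (m : ℤ) • Submodule.Quotient.mk w := by
    intro m _ x
    obtain ⟨v, hv⟩ := hmod m x
    have hdvd : ∀ j, (m : ℤ) ∣ (x j - Cmat.mulVec v j) := fun j =>
      (ZMod.intCast_zmod_eq_zero_iff_dvd _ m).mp (hv j)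
    choose c hc using hdvd
    refine ⟨c, ?_⟩
    have hx : x = Cmat.mulVec v + (m : ℤ) • c := by
      funext j
      have := hc j
      simp only [Pi.add_apply, Pi.smul_apply, smul_eq_mul]
      omega
    rw [hx]
    rw [Submodule.Quotient.mk_add, Submodule.Quotient.mk_smul]
    have : Submodule.Quotient.mk (p := LinearMap.range f) (Cmat.mulVec v) = 0 := by
      rw [Submodule.Quotient.mk_eq_zero]
      exact ⟨v, by rw [hf]; exact Matrix.toLin'_apply _ _⟩
    rw [this, zero_add]
  have hQsub : Subsingleton ((Fin k → ℤ) ⧸ LinearMap.range f) := by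
    set Q := (Fin k → ℤ) ⧸ LinearMap.range f with hQ
    have hfg : (⊤ : Submodule ℤ Q).FG := Module.Finite.fg_top
    have hIN : (⊤ : Submodule ℤ Q) ≤ Ideal.span {(2 : ℤ)} • ⊤ := by
      intro q _
      obtain ⟨x, rfl⟩ := Submodule.Quotient.mk_surjective _ q
      obtain ⟨w, hw⟩ := hrange 2 x
      rw [hw]
      exact Submodule.smul_mem_smul (Ideal.mem_span_singleton_self 2) trivial
    obtain ⟨r₀, hr₁, hr₀⟩ :=
      Submodule.exists_sub_one_mem_and_smul_eq_zero_of_fg_of_le_smul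
        (Ideal.span {(2 : ℤ)}) ⊤ hfg hIN
    obtain ⟨t, ht⟩ := Ideal.mem_span_singleton'.mp hr₁
    have hr₀ne : r₀ ≠ 0 := by
      intro h
      rw [h] at ht
      omega
    have : NeZero r₀.natAbs := ⟨by simpa using hr₀ne⟩
    refine ⟨fun q q' => ?_⟩
    have key : ∀ q : Q, q = 0 := by
      intro q
      obtain ⟨x, rfl⟩ := Submodule.Quotient.mk_surjective _ q
      obtain ⟨w, hw⟩ := hrange r₀.natAbs x
      rw [hw]
      have hz : r₀ • Submodule.Quotient.mk (p := LinearMap.range f) w = 0 :=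
        hr₀ _ trivial
      rcases Int.natAbs_eq r₀ with h | h
      · rw [← h, hz]
      · rw [show ((r₀.natAbs : ℤ)) = -r₀ by omega, neg_smul, hz, neg_zero]
    rw [key q, key q']
  have hsurj : Function.Surjective f := by
    rw [← LinearMap.range_eq_top]
    exact Submodule.Quotient.subsingleton_iff.mp hQsub
  -- Step 3: splitting
  obtain ⟨s, hs⟩ := Module.projective_lifting_property f LinearMap.id hsurj
  set B : Matrix (Fin n) (Fin k) ℤ := LinearMap.toMatrix' s with hB
  have hCB : Cmat * B = 1 := by
    apply Matrix.toLin'.injective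
    rw [Matrix.toLin'_mul, Matrix.toLin'_one]
    rw [hB, Matrix.toLin'_toMatrix']
    exact hs
  set g' : (Fin k → ℤ) →ₗ[ℤ] (Fin n → ℤ) := Matrix.toLin' Cmat.transpose with hg'
  set h' : (Fin n → ℤ) →ₗ[ℤ] (Fin k → ℤ) := Matrix.toLin' B.transpose with hh'
  have hretr : h' ∘ₗ g' = LinearMap.id := by
    rw [hg', hh', ← Matrix.toLin'_mul, ← Matrix.transpose_mul, hCB]
    simp
  have hretr' : ∀ a, h' (g' a) = a := fun a => congrArg (fun F => F a) hretr
  -- the linear equivalence (Fin k → ℤ) × ker h' ≃ (Fin n → ℤ)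
  let F : (Fin n → ℤ) →ₗ[ℤ] (Fin k → ℤ) × (LinearMap.ker h') :=
    LinearMap.prod h'
      ((LinearMap.id - g' ∘ₗ h').codRestrict (LinearMap.ker h') (by
        intro v
        simp [LinearMap.mem_ker, map_sub, hretr']))
  let G : ((Fin k → ℤ) × (LinearMap.ker h')) →ₗ[ℤ] (Fin n → ℤ) :=
    g' ∘ₗ LinearMap.fst ℤ _ _ + (LinearMap.ker h').subtype ∘ₗ LinearMap.snd ℤ _ _
  have hGapp : ∀ p : ((Fin k → ℤ) × (LinearMap.ker h')), G p = g' p.1 + (p.2 : Fin n → ℤ) := by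
    intro p; rfl
  have hGF : F ∘ₗ G = LinearMap.id := by
    apply LinearMap.ext
    rintro ⟨a, w, hw⟩
    rw [LinearMap.mem_ker] at hw
    have hGa : G (a, ⟨w, by rwa [LinearMap.mem_ker]⟩) = g' a + w := rfl
    apply Prod.ext
    · show h' (g' a + w) = a
      rw [map_add, hretr' a, hw, add_zero]
    · apply Subtype.ext
      show (g' a + w) - g' (h' (g' a + w)) = w
      rw [map_add, hretr' a, hw, add_zero]
      abel
  have hFG : G ∘ₗ F = LinearMap.id := by
    apply LinearMap.ext
    intro v
    show g' (h' v) + (v - g' (h' v)) = v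
    abel
  let e : ((Fin k → ℤ) × (LinearMap.ker h')) ≃ₗ[ℤ] (Fin n → ℤ) :=
    LinearEquiv.ofLinear G F hFG hGF
  -- basis of the kernel
  have hfrk : Module.finrank ℤ (LinearMap.ker h') = n - k := by
    have h1 : Module.finrank ℤ ((Fin k → ℤ) × (LinearMap.ker h')) = n := by
      rw [e.finrank_eq]
      simp [Module.finrank_pi]
    rw [Module.finrank_prod, Module.finrank_pi, Fintype.card_fin] at h1
    omega
  have hcard : Fintype.card (Module.Free.ChooseBasisIndex ℤ (LinearMap.ker h')) = n - k := by
    rw [← Module.finrank_eq_card_chooseBasisIndex, hfrk]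
  let bK : Module.Basis (Fin (n - k)) ℤ (LinearMap.ker h') :=
    (Module.Free.chooseBasis ℤ (LinearMap.ker h')).reindex (Fintype.equivFinOfCardEq hcard)
  let bProd : Module.Basis (Fin k ⊕ Fin (n - k)) ℤ ((Fin k → ℤ) × (LinearMap.ker h')) :=
    (Pi.basisFun ℤ (Fin k)).prod bK
  let reidx : (Fin k ⊕ Fin (n - k)) ≃ Fin n :=
    finSumFinEquiv.trans (finCongr (Nat.add_sub_cancel' hk))
  let b : Module.Basis (Fin n) ℤ (Fin n → ℤ) := (bProd.map e).reindex reidx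
  have hb : ∀ j : Fin k, b (Fin.castLE hk j) = rowC n (g j) := by
    intro j
    have hidx : reidx.symm (Fin.castLE hk j) = Sum.inl j := by
      rw [Equiv.symm_apply_eq]
      show finCongr (Nat.add_sub_cancel' hk) (finSumFinEquiv (Sum.inl j)) = Fin.castLE hk j
      apply Fin.ext
      simp
    show ((bProd.map e).reindex reidx) (Fin.castLE hk j) = rowC n (g j)
    rw [Module.Basis.reindex_apply, hidx, Module.Basis.map_apply]
    have hpr : bProd (Sum.inl j) = (Pi.single j 1, 0) := by
      simp [bProd, Module.Basis.prod_apply, Pi.basisFun_apply]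
    rw [hpr]
    show g' (Pi.single j 1) + ((0 : LinearMap.ker h') : Fin n → ℤ) = rowC n (g j)
    rw [hg']
    rw [Matrix.toLin'_apply, Matrix.mulVec_single]
    funext i
    simp [Cmat, Matrix.transpose_apply]
  refine ⟨?_, ⟨b, fun j => hb j⟩⟩
  -- no g j lies in the derived subalgebra
  intro j hmem
  have hrow0 : rowC n (g j) = 0 := by
    set Φab : FreeLieAlgebra ℤ (Fin n) →ₗ⁅ℤ⁆ MvPolynomial (Fin n) ℤ :=
      (φ' n).toLieHom.comp (ω n) with hΦab
    have h1 : Φab (g j) ∈ (LieAlgebra.derivedSeries ℤ (FreeLieAlgebra ℤ (Fin n)) 1).map Φab :=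
      LieIdeal.mem_map hmem
    have h2 : LieAlgebra.derivedSeries ℤ (MvPolynomial (Fin n) ℤ) 1 = ⊥ := by
      show LieAlgebra.derivedSeriesOfIdeal ℤ _ 1 ⊤ = ⊥
      rw [LieAlgebra.derivedSeriesOfIdeal_succ, LieAlgebra.derivedSeriesOfIdeal_zero]
      rw [LieSubmodule.lie_eq_bot_iff]
      intro x _ y _
      rw [LieRing.of_associative_ring_bracket, mul_comm, sub_self]
    have h3 : Φab (g j) = 0 := by
      have hle := LieIdeal.derivedSeries_map_le (f := Φab) 1
      have := hle h1
      rw [h2] at this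
      simpa using this
    funext i
    show MvPolynomial.coeff (Finsupp.single i 1) (φ' n (ω n (g j))) = 0
    have : φ' n (ω n (g j)) = 0 := h3
    rw [this, MvPolynomial.coeff_zero]
  have := b.ne_zero (Fin.castLE hk j)
  rw [hb j, hrow0] at this
  exact this rfl
end
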